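/- For even n, let f_n : {−1,1}^n → ℝ be defined by f_n(x) = sign(∑_{j=1}^n x_j), where sign(0) = 0. Then 𝔼|∇f_n| = 2^{−n−1} · ( C(n, n/2) · √n + 2 · C(n, n/2 + 1) · √(n/2 + 1) ), where C(n,k) is the binomial coefficient, and consequently 𝔼|∇f_n| → (1 + √2)/√(2π) as n → ∞ through even values. -/

import Mathlib

/-- Expectation with respect to the uniform probability measure on the Hamming cube
`{-1,1}^n`, encoded as `Fin n → Bool`. -/
noncomputable def cubeE {n : ℕ} (f : (Fin n → Bool) → ℝ) : ℝ :=
  (∑ x : Fin n → Bool, f x) / 2 ^ n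

/-- The `j`-th discrete partial derivative on the Hamming cube. -/
noncomputable def pderiv {n : ℕ} (j : Fin n) (f : (Fin n → Bool) → ℝ)
    (x : Fin n → Bool) : ℝ :=
  (f (Function.update x j true) - f (Function.update x j false)) / 2

/-- The gradient length `|∇f|(x) = (∑_j (∂_j f(x))²)^{1/2}`. -/
noncomputable def gradLen {n : ℕ} (f : (Fin n → Bool) → ℝ) (x : Fin n → Bool) : ℝ :=
  Real.sqrt (∑ j, (pderiv j f x) ^ 2)

/-- The coordinate value `x_i = ±1` of a Boolean-encoded cube point. -/
def chi (b : Bool) : ℝ := if b then 1 else -1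

/-- The majority-type function `f_n(x) = sign(∑_{j=1}^n x_j)` (with `sign 0 = 0`). -/
noncomputable def signFun (n : ℕ) (x : Fin n → Bool) : ℝ :=
  Real.sign (∑ j, chi (x j))

open Finset Filter Topology

/-! ### Auxiliary definitions and lemmas -/

def sgnZ (b : Bool) : ℤ := if b then 1 else -1

def Tz {n : ℕ} (x : Fin n → Bool) : ℤ := ∑ j, sgnZ (x j)

def Kt {n : ℕ} (x : Fin n → Bool) : ℕ := (univ.filter fun j => x j = true).card

lemma chi_eq (b : Bool) : chi b = ((sgnZ b : ℤ) : ℝ) := by cases b <;> simp [chi, sgnZ]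

lemma signFun_eq {n : ℕ} (x : Fin n → Bool) : signFun n x = Real.sign ((Tz x : ℤ) : ℝ) := by
  simp only [signFun, chi_eq, Tz]
  norm_cast

lemma Tz_eq {n : ℕ} (x : Fin n → Bool) : Tz x = 2 * Kt x - n := by
  have h : ∀ j, sgnZ (x j) = 2 * (if x j = true then (1:ℤ) else 0) - 1 := by
    intro j; cases hx : x j <;> simp [sgnZ]
  rw [Tz]
  simp only [h]
  rw [Finset.sum_sub_distrib, ← Finset.mul_sum, Finset.sum_boole, Finset.sum_const]
  simp [Kt]

lemma Tz_update {n : ℕ} (x : Fin n → Bool) (j : Fin n) (b : Bool) :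
    Tz (Function.update x j b) = Tz x - sgnZ (x j) + sgnZ b := by
  have h1 : (fun i => sgnZ (Function.update x j b i)) =
      Function.update (fun i => sgnZ (x i)) j (sgnZ b) := by
    ext i; by_cases hij : i = j <;> simp [Function.update, hij]
  rw [Tz, h1, Finset.sum_update_of_mem (Finset.mem_univ j)]
  rw [Tz, ← Finset.sum_erase_add _ _ (Finset.mem_univ j)]
  rw [Finset.sdiff_singleton_eq_erase]
  ring

lemma sign_pair (t : ℤ) (ht : Odd t) :
    (Real.sign ((t:ℝ) + 1) - Real.sign ((t:ℝ) - 1)) / 2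
      = if t = 1 ∨ t = -1 then (1:ℝ)/2 else 0 := by
  have hodd := Int.odd_iff.mp ht
  by_cases h1 : t = 1
  · subst h1; norm_num [Real.sign_of_pos]
  by_cases h2 : t = -1
  · subst h2
    rw [if_pos (Or.inr rfl), show ((-1:ℤ):ℝ) + 1 = 0 by norm_num, Real.sign_zero,
      show ((-1:ℤ):ℝ) - 1 = -2 by norm_num, Real.sign_of_neg (by norm_num)]
    norm_num
  have h3 : 3 ≤ t ∨ t ≤ -3 := by omega
  rw [if_neg (by tauto)]
  rcases h3 with h | h
  · have hp1 : (0:ℝ) < (t:ℝ) + 1 := by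
      have : (3:ℝ) ≤ (t:ℝ) := by exact_mod_cast h
      linarith
    have hp2 : (0:ℝ) < (t:ℝ) - 1 := by
      have : (3:ℝ) ≤ (t:ℝ) := by exact_mod_cast h
      linarith
    rw [Real.sign_of_pos hp1, Real.sign_of_pos hp2]; ring
  · have hc : (t:ℝ) ≤ -3 := by exact_mod_cast h
    rw [Real.sign_of_neg (by linarith), Real.sign_of_neg (by linarith)]; ring

lemma pderiv_sign {m : ℕ} (j : Fin (2*m)) (x : Fin (2*m) → Bool) :
    pderiv j (signFun (2*m)) x
      = if Tz x - sgnZ (x j) = 1 ∨ Tz x - sgnZ (x j) = -1 then (1:ℝ)/2 else 0 := by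
  set t := Tz x - sgnZ (x j) with htdef
  have h1 : Tz (Function.update x j true) = t + 1 := by
    rw [Tz_update, htdef]; cases hx : x j <;> simp [sgnZ, hx] <;> ring
  have h2 : Tz (Function.update x j false) = t - 1 := by
    rw [Tz_update, htdef]; cases hx : x j <;> simp [sgnZ, hx] <;> ring
  have hodd : Odd t := by
    have h : t = 2 * (Kt x : ℤ) - (2*m : ℕ) - sgnZ (x j) := by
      rw [htdef, Tz_eq]
    rw [Int.odd_iff]
    cases hx : x j <;> simp [sgnZ, hx] at h <;> push_cast at h <;> omega
  rw [pderiv, signFun_eq, signFun_eq, h1, h2]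
  push_cast
  exact sign_pair t hodd

lemma gradLen_sign' {m : ℕ} (x : Fin (2*m) → Bool) :
    gradLen (signFun (2*m)) x =
      Real.sqrt ((univ.filter fun j =>
        Tz x - sgnZ (x j) = 1 ∨ Tz x - sgnZ (x j) = -1).card) / 2 := by
  rw [gradLen]
  have h : ∀ j, (pderiv j (signFun (2*m)) x)^2
      = if (Tz x - sgnZ (x j) = 1 ∨ Tz x - sgnZ (x j) = -1) then (1:ℝ)/4 else 0 := by
    intro j; rw [pderiv_sign]; split_ifs <;> norm_num
  rw [Finset.sum_congr rfl fun j _ => h j, Finset.sum_ite, Finset.sum_const,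
    Finset.sum_const_zero, add_zero, nsmul_eq_mul]
  rw [show (1:ℝ)/4 = (1/2)^2 by norm_num, Real.sqrt_mul (by positivity),
    Real.sqrt_sq (by norm_num)]
  ring

lemma Kt_le {n : ℕ} (x : Fin n → Bool) : Kt x ≤ n := by
  have := Finset.card_filter_le (univ : Finset (Fin n)) (fun j => x j = true)
  simpa [Kt] using this

lemma gradLen_sign_cases {m : ℕ} (x : Fin (2*m) → Bool) :
    gradLen (signFun (2*m)) x =
      (if Kt x = m then Real.sqrt (2*m) / 2
       else if Kt x = m + 1 ∨ Kt x + 1 = m then Real.sqrt (m+1) / 2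
       else 0) := by
  rw [gradLen_sign']
  have hT := Tz_eq x
  by_cases h1 : Kt x = m
  · rw [if_pos h1]
    have hT0 : Tz x = 0 := by rw [hT, h1]; push_cast; ring
    have : (univ.filter fun j =>
        Tz x - sgnZ (x j) = 1 ∨ Tz x - sgnZ (x j) = -1) = univ := by
      apply Finset.filter_true_of_mem
      intro j _
      rw [hT0]; cases hx : x j <;> simp [sgnZ, hx]
    rw [this, Finset.card_univ, Fintype.card_fin]
    push_cast; ring_nf
  rw [if_neg h1]
  by_cases h2 : Kt x = m + 1
  · rw [if_pos (Or.inl h2)]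
    have hT2 : Tz x = 2 := by rw [hT, h2]; push_cast; ring
    have : (univ.filter fun j =>
        Tz x - sgnZ (x j) = 1 ∨ Tz x - sgnZ (x j) = -1)
        = univ.filter fun j => x j = true := by
      apply Finset.filter_congr
      intro j _
      rw [hT2]; cases hx : x j <;> simp [sgnZ, hx]
    rw [this]
    have : (univ.filter fun j => x j = true).card = m + 1 := by rw [← Kt, h2]
    rw [this]; push_cast; ring_nf
  by_cases h3 : Kt x + 1 = m
  · rw [if_pos (Or.inr h3)]
    have hT3 : Tz x = -2 := by rw [hT]; push_cast; omega
    have he : (univ.filter fun j =>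
        Tz x - sgnZ (x j) = 1 ∨ Tz x - sgnZ (x j) = -1)
        = univ.filter fun j => ¬ (x j = true) := by
      apply Finset.filter_congr
      intro j _
      rw [hT3]; cases hx : x j <;> simp [sgnZ, hx]
    have hcard := Finset.card_filter_add_card_filter_not
      (s := (univ : Finset (Fin (2*m)))) (p := fun j => x j = true)
    rw [Finset.card_univ, Fintype.card_fin] at hcard
    have hK : (univ.filter fun j => x j = true).card = Kt x := rfl
    rw [he, show (univ.filter fun j => ¬ (x j = true)).card = m + 1 by omega]
    push_cast; ring_nf
  · rw [if_neg (by tauto)]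
    have : (univ.filter fun j =>
        Tz x - sgnZ (x j) = 1 ∨ Tz x - sgnZ (x j) = -1) = ∅ := by
      apply Finset.filter_false_of_mem
      intro j _
      cases hx : x j <;> simp [sgnZ, hx] <;> omega
    rw [this]
    simp

lemma card_K (n k : ℕ) :
    (univ.filter fun x : Fin n → Bool => Kt x = k).card = n.choose k := by
  have h : n.choose k = (Finset.powersetCard k (univ : Finset (Fin n))).card := by
    rw [Finset.card_powersetCard, Finset.card_univ, Fintype.card_fin]
  rw [h]
  refine Finset.card_bij' (fun x _ => univ.filter fun j => x j = true)
    (fun s _ => fun j => decide (j ∈ s)) ?_ ?_ ?_ ?_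
  · intro x hx
    rw [Finset.mem_filter] at hx
    rw [Finset.mem_powersetCard]
    exact ⟨Finset.subset_univ _, hx.2⟩
  · intro s hs
    rw [Finset.mem_powersetCard] at hs
    rw [Finset.mem_filter]
    refine ⟨Finset.mem_univ _, ?_⟩
    rw [Kt, show (univ.filter fun j => decide (j ∈ s) = true) = s by ext j; simp]
    exact hs.2
  · intro x _
    funext j
    cases hx : x j <;> simp [hx]
  · intro s _
    ext j
    simp

lemma sum_over_cube {n : ℕ} (g : ℕ → ℝ) :
    ∑ x : Fin n → Bool, g (Kt x) = ∑ k ∈ Finset.range (n+1), (n.choose k : ℝ) * g k := by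
  rw [← Finset.sum_fiberwise_of_maps_to' (g := fun x : Fin n → Bool => Kt x)
    (t := Finset.range (n+1)) ?_ (fun k => g k)]
  · refine Finset.sum_congr rfl fun k _ => ?_
    rw [Finset.sum_const, card_K, nsmul_eq_mul]
  · intro x _
    rw [Finset.mem_range]
    have := Finset.card_filter_le (univ : Finset (Fin n)) (fun j => x j = true)
    simp only [Finset.card_univ, Fintype.card_fin] at this
    simp only [Kt]
    omega

lemma part1 (n : ℕ) (hn : Even n) :
    cubeE (gradLen (signFun n))
      = (2 : ℝ) ^ (-(n : ℤ) - 1) *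
          ((n.choose (n / 2)) * Real.sqrt (n : ℝ)
            + 2 * (n.choose (n / 2 + 1)) * Real.sqrt ((n : ℝ) / 2 + 1)) := by
  obtain ⟨r, hr⟩ := hn
  obtain ⟨m, hm⟩ : ∃ m, n = 2 * m := ⟨r, by omega⟩
  subst hm
  rcases Nat.eq_zero_or_pos m with rfl | hm1
  · simp [cubeE, gradLen, pderiv, signFun]
  set G : ℕ → ℝ := fun k =>
      if k = m then Real.sqrt (2*m) / 2
      else if k = m + 1 ∨ k + 1 = m then Real.sqrt (m+1) / 2
      else 0 with hG
  have hsum : ∑ x : Fin (2*m) → Bool, gradLen (signFun (2*m)) x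
      = ∑ k ∈ Finset.range (2*m+1), ((2*m).choose k : ℝ) * G k := by
    rw [← sum_over_cube]
    exact Finset.sum_congr rfl fun x _ => gradLen_sign_cases x
  have hsplit : ∀ k, ((2*m).choose k : ℝ) * G k
      = (if k = m then ((2*m).choose k : ℝ) * (Real.sqrt (2*m) / 2) else 0)
        + (if k = m+1 then ((2*m).choose k : ℝ) * (Real.sqrt (m+1) / 2) else 0)
        + (if k = m-1 then ((2*m).choose k : ℝ) * (Real.sqrt (m+1) / 2) else 0) := by
    intro k
    simp only [hG]
    by_cases h1 : k = m
    · rw [if_pos h1, if_pos h1, if_neg (by omega), if_neg (by omega)]; ring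
    by_cases h2 : k = m + 1
    · rw [if_neg h1, if_neg h1, if_pos (by omega), if_pos h2, if_neg (by omega)]; ring
    by_cases h3 : k = m - 1
    · rw [if_neg h1, if_neg h1, if_pos (by omega), if_neg h2, if_pos h3]; ring
    · rw [if_neg h1, if_neg h1, if_neg (by omega), if_neg h2, if_neg h3]; ring
  rw [cubeE, hsum, Finset.sum_congr rfl fun k _ => hsplit k]
  rw [Finset.sum_add_distrib, Finset.sum_add_distrib,
    Finset.sum_ite_eq' (Finset.range (2*m+1)) m
      (fun k => ((2*m).choose k : ℝ) * (Real.sqrt (2*m) / 2)),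
    Finset.sum_ite_eq' (Finset.range (2*m+1)) (m+1)
      (fun k => ((2*m).choose k : ℝ) * (Real.sqrt (m+1) / 2)),
    Finset.sum_ite_eq' (Finset.range (2*m+1)) (m-1)
      (fun k => ((2*m).choose k : ℝ) * (Real.sqrt (m+1) / 2)),
    if_pos (by simp; omega), if_pos (by simp; omega), if_pos (by simp; omega)]
  have hsymm : (2*m).choose (m-1) = (2*m).choose (m+1) := by
    rw [← Nat.choose_symm (by omega : m + 1 ≤ 2*m), show 2*m - (m+1) = m - 1 by omega]
  rw [hsymm]
  have hdiv : (2*m) / 2 = m := by omega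
  rw [hdiv]
  have hcast1 : ((2*m : ℕ) : ℝ) = 2 * (m:ℝ) := by push_cast; ring
  have hcast2 : ((2*m : ℕ) : ℝ) / 2 + 1 = ((m:ℝ) + 1) := by push_cast; ring
  rw [hcast2, hcast1]
  have h2 : (2:ℝ) ^ (-((2*m : ℕ) : ℤ) - 1) = 1 / (2 ^ (2*m) * 2) := by
    rw [show (-((2*m:ℕ) : ℤ) - 1) = -(((2*m+1 : ℕ)):ℤ) by push_cast; ring,
      zpow_neg, zpow_natCast, pow_succ]
    rw [one_div]
  rw [h2]
  have hpow : (0:ℝ) < 2 ^ (2*m) := by positivity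
  field_simp
  ring

/-! ### Asymptotics -/

lemma a_eq (m : ℕ) (hm : 1 ≤ m) :
    ((2*m).choose m : ℝ) * Real.sqrt m / 4^m
      = Stirling.stirlingSeq (2*m) / (Stirling.stirlingSeq m)^2 := by
  have hm0 : (0:ℝ) < m := by exact_mod_cast hm
  have hs : (0:ℝ) < Real.sqrt m := Real.sqrt_pos.mpr hm0
  have hτ : (0:ℝ) < Real.sqrt (2*(m:ℝ)) := Real.sqrt_pos.mpr (by linarith)
  have he : (0:ℝ) < Real.exp 1 := Real.exp_pos 1
  have hE : (0:ℝ) < ((m:ℝ)/Real.exp 1)^m := by positivity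
  have hA : (0:ℝ) < (m.factorial : ℝ) := by exact_mod_cast m.factorial_pos
  have h4 : (0:ℝ) < (4:ℝ)^m := by positivity
  have hfact : (((2*m).factorial) : ℝ) = ((2*m).choose m : ℝ) * ((m.factorial:ℝ))^2 := by
    have h := Nat.choose_mul_factorial_mul_factorial (show m ≤ 2*m by omega)
    rw [show 2*m - m = m by omega] at h
    push_cast [← h]; ring
  rw [Stirling.stirlingSeq, Stirling.stirlingSeq]
  have h1 : (((2*m:ℕ)):ℝ) = 2*(m:ℝ) := by push_cast; ring
  rw [h1]
  have h2 : Real.sqrt (2*(2*(m:ℝ))) = 2 * Real.sqrt m := by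
    rw [show 2*(2*(m:ℝ)) = (2*Real.sqrt m)^2 by rw [mul_pow, Real.sq_sqrt hm0.le]; ring]
    exact Real.sqrt_sq (by positivity)
  have h3 : ((2*(m:ℝ))/Real.exp 1)^(2*m) = 4^m * (((m:ℝ)/Real.exp 1)^m)^2 := by
    rw [show (2*(m:ℝ))/Real.exp 1 = 2*((m:ℝ)/Real.exp 1) by ring,
      show (4:ℝ)^m = 2^(m*2) by rw [mul_comm, pow_mul]; norm_num]
    ring
  rw [h2, h3, hfact]
  have hs2 : Real.sqrt m * Real.sqrt m = (m:ℝ) := Real.mul_self_sqrt hm0.le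
  have hτ2 : Real.sqrt (2*(m:ℝ)) * Real.sqrt (2*(m:ℝ)) = 2*(m:ℝ) :=
    Real.mul_self_sqrt (by linarith)
  field_simp
  ring_nf
  rw [Real.sq_sqrt hm0.le, Real.sq_sqrt (by positivity)]
  ring

lemma tendsto_two_mul : Tendsto (fun m : ℕ => 2*m) atTop atTop :=
  tendsto_atTop_atTop_of_monotone (fun a b h => by omega) (fun b => ⟨b, by omega⟩)

lemma tendsto_a :
    Tendsto (fun m : ℕ => ((2*m).choose m : ℝ) * Real.sqrt m / 4^m) atTop
      (𝓝 (1 / Real.sqrt Real.pi)) := by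
  have hπ : (0:ℝ) < Real.sqrt Real.pi := Real.sqrt_pos.mpr Real.pi_pos
  have h1 : Tendsto (fun m : ℕ => Stirling.stirlingSeq (2*m)) atTop
      (𝓝 (Real.sqrt Real.pi)) := Stirling.tendsto_stirlingSeq_sqrt_pi.comp tendsto_two_mul
  have h2 : Tendsto (fun m : ℕ => (Stirling.stirlingSeq m)^2) atTop
      (𝓝 ((Real.sqrt Real.pi)^2)) := Stirling.tendsto_stirlingSeq_sqrt_pi.pow 2
  have h3 := h1.div h2 (by positivity)
  have h4 : Real.sqrt Real.pi / (Real.sqrt Real.pi)^2 = 1 / Real.sqrt Real.pi := by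
    rw [sq]; field_simp
  rw [h4] at h3
  refine h3.congr' ?_
  filter_upwards [eventually_ge_atTop 1] with m hm
  exact (a_eq m hm).symm

lemma E2m (m : ℕ) : cubeE (gradLen (signFun (2*m)))
    = (((2*m).choose m : ℝ) * Real.sqrt m / 4^m) * (Real.sqrt 2 / 2)
      + (((2*m).choose (m+1) : ℝ) * Real.sqrt ((m:ℝ)+1) / 4^m) := by
  rw [part1 (2*m) ⟨m, by ring⟩, Nat.mul_div_cancel_left m (by norm_num)]
  have hc : ((2*m : ℕ) : ℝ) = 2 * (m:ℝ) := by push_cast; ring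
  rw [hc, show (2*(m:ℝ))/2 + 1 = (m:ℝ)+1 by ring,
    Real.sqrt_mul (by norm_num : (0:ℝ) ≤ 2) (m:ℝ),
    show (2:ℝ) ^ (-((2*m : ℕ) : ℤ) - 1) = 1 / (4^m * 2) by
      rw [show (-((2*m:ℕ) : ℤ) - 1) = -(((2*m+1 : ℕ)):ℤ) by push_cast; ring,
        zpow_neg, zpow_natCast, pow_succ, pow_mul]
      norm_num]
  field_simp

lemma term2_eq (m : ℕ) (hm : 1 ≤ m) :
    (((2*m).choose (m+1) : ℝ) * Real.sqrt ((m:ℝ)+1) / 4^m)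
      = (((2*m).choose m : ℝ) * Real.sqrt m / 4^m) * Real.sqrt ((m:ℝ)/((m:ℝ)+1)) := by
  have hm0 : (0:ℝ) < m := by exact_mod_cast hm
  have hC : ((2*m).choose (m+1) : ℝ) * ((m:ℝ)+1) = ((2*m).choose m : ℝ) * m := by
    have h := Nat.choose_succ_right_eq (2*m) m
    rw [show 2*m - m = m by omega] at h
    exact_mod_cast h
  have hsd : Real.sqrt ((m:ℝ)/((m:ℝ)+1)) = Real.sqrt m / Real.sqrt ((m:ℝ)+1) :=
    Real.sqrt_div hm0.le _
  rw [hsd]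
  have hs1 : (0:ℝ) < Real.sqrt ((m:ℝ)+1) := Real.sqrt_pos.mpr (by linarith)
  have h4 : (0:ℝ) < (4:ℝ)^m := by positivity
  have hss : Real.sqrt ((m:ℝ)+1) * Real.sqrt ((m:ℝ)+1) = (m:ℝ)+1 :=
    Real.mul_self_sqrt (by linarith)
  have hss2 : Real.sqrt (m:ℝ) * Real.sqrt (m:ℝ) = (m:ℝ) := Real.mul_self_sqrt hm0.le
  field_simp
  linear_combination ((((2*m).choose (m+1) : ℕ):ℝ)) * hss
    - ((((2*m).choose m : ℕ):ℝ)) * hss2 + hC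

lemma transfer {f : ℕ → ℝ} {L : ℝ} (h : Tendsto (fun m => f (2*m)) atTop (𝓝 L)) :
    Tendsto f (atTop ⊓ 𝓟 {n | Even n}) (𝓝 L) := by
  rw [Filter.tendsto_def] at h ⊢
  intro s hs
  obtain ⟨N, hN⟩ := Filter.mem_atTop_sets.mp (h s hs)
  refine Filter.mem_of_superset
    (Filter.inter_mem_inf (Filter.mem_atTop (2*N)) (Filter.mem_principal_self _)) ?_
  rintro n ⟨h1n, h2n⟩
  have h1n' : 2*N ≤ n := h1n
  obtain ⟨r, hr⟩ := h2n
  have hn2 : n = 2*r := by omega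
  have hrN : r ≥ N := by omega
  have := hN r hrN
  simpa [← hn2] using this

lemma sqrt_ratio_tendsto :
    Tendsto (fun m : ℕ => Real.sqrt ((m:ℝ)/((m:ℝ)+1))) atTop (𝓝 1) := by
  have h1 : Tendsto (fun m : ℕ => (m:ℝ)/((m:ℝ)+1)) atTop (𝓝 1) :=
    tendsto_natCast_div_add_atTop (1:ℝ)
  have h2 := (Real.continuous_sqrt.tendsto 1).comp h1
  have h3 : Tendsto (fun m : ℕ => Real.sqrt ((m:ℝ)/((m:ℝ)+1))) atTop (𝓝 (Real.sqrt 1)) := h2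
  rw [Real.sqrt_one] at h3
  exact h3

lemma const_identity :
    (1 / Real.sqrt Real.pi) * (Real.sqrt 2 / 2) + (1 / Real.sqrt Real.pi) * 1
      = (1 + Real.sqrt 2) / Real.sqrt (2 * Real.pi) := by
  have hπ : (0:ℝ) < Real.sqrt Real.pi := Real.sqrt_pos.mpr Real.pi_pos
  have h2 : (0:ℝ) < Real.sqrt 2 := by positivity
  have hm : Real.sqrt (2 * Real.pi) = Real.sqrt 2 * Real.sqrt Real.pi :=
    Real.sqrt_mul (by norm_num) _
  have hs2 : Real.sqrt 2 * Real.sqrt 2 = 2 := Real.mul_self_sqrt (by norm_num)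
  rw [hm]
  field_simp
  linear_combination hs2

lemma part2 :
    Tendsto (fun n : ℕ => cubeE (gradLen (signFun n)))
      (atTop ⊓ 𝓟 {n | Even n})
      (𝓝 ((1 + Real.sqrt 2) / Real.sqrt (2 * Real.pi))) := by
  apply transfer
  have hterm1 : Tendsto (fun m : ℕ =>
      (((2*m).choose m : ℝ) * Real.sqrt m / 4^m) * (Real.sqrt 2 / 2)) atTop
      (𝓝 ((1 / Real.sqrt Real.pi) * (Real.sqrt 2 / 2))) := tendsto_a.mul_const _
  have hterm2 : Tendsto (fun m : ℕ =>
      (((2*m).choose (m+1) : ℝ) * Real.sqrt ((m:ℝ)+1) / 4^m)) atTop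
      (𝓝 ((1 / Real.sqrt Real.pi) * 1)) := by
    refine (tendsto_a.mul sqrt_ratio_tendsto).congr' ?_
    filter_upwards [eventually_ge_atTop 1] with m hm
    exact (term2_eq m hm).symm
  have := hterm1.add hterm2
  rw [const_identity] at this
  refine this.congr' ?_
  filter_upwards [] with m
  exact (E2m m).symm

/-- For even `n`, `𝔼|∇f_n| = 2^{−n−1}·(C(n,n/2)·√n + 2·C(n,n/2+1)·√(n/2+1))` for
`f_n = sign(∑ x_j)` (with `sign 0 = 0`), and consequently
`𝔼|∇f_n| → (1+√2)/√(2π)` as `n → ∞` through even values. -/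
theorem grad_norm_of_sign_even :
    (∀ n : ℕ, Even n →
      cubeE (gradLen (signFun n))
        = (2 : ℝ) ^ (-(n : ℤ) - 1) *
            ((n.choose (n / 2)) * Real.sqrt (n : ℝ)
              + 2 * (n.choose (n / 2 + 1)) * Real.sqrt ((n : ℝ) / 2 + 1))) ∧
    Filter.Tendsto (fun n : ℕ => cubeE (gradLen (signFun n)))
      (Filter.atTop ⊓ Filter.principal {n | Even n})
      (nhds ((1 + Real.sqrt 2) / Real.sqrt (2 * Real.pi))) := by
  exact ⟨part1, part2⟩
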